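/- Let d ≥ 3 be an integer and let a₀, a₁, …, a_d be nonnegative real numbers with a_d > 0; set P(x) = a_d·x^d + a_{d-1}·x^{d-1} + ⋯ + a₁·x + a₀. Then the maximal solution of the ODE ẍ(t) = P'(x(t)) with initial conditions x(0) = 1 and ẋ(0) = √(2·a_d) blows up in finite time: its maximal interval of existence does not contain [0,∞). -/

import Mathlib

open Set Polynomial

noncomputable section

/-- `x` (with velocity `v`) solves the second-order scalar ODE
`ẍ(t) = F (t, x(t))` on the set `s`. -/
def SolOn (F : ℝ → ℝ → ℝ) (x v : ℝ → ℝ) (s : Set ℝ) : Prop :=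
  ∀ t ∈ s, HasDerivAt x (v t) t ∧ HasDerivAt v (F t (x t)) t

/-- `x` (with velocity `v`) is a maximal solution of `ẍ(t) = F (t, x(t))` on
the open interval `s`. -/
def IsMaximalSolution (F : ℝ → ℝ → ℝ) (x v : ℝ → ℝ) (s : Set ℝ) : Prop :=
  IsOpen s ∧ s.OrdConnected ∧ s.Nonempty ∧ SolOn F x v s ∧
  ∀ (s' : Set ℝ) (x' v' : ℝ → ℝ), IsOpen s' → s'.OrdConnected → s ⊆ s' →
    SolOn F x' v' s' → (∀ t ∈ s, x' t = x t ∧ v' t = v t) → s' = s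

lemma blowup_aux_eval (d : ℕ) (a : ℕ → ℝ) (p : ℝ) :
    Polynomial.eval p (Polynomial.derivative
      (∑ i ∈ Finset.range (d + 1), Polynomial.C (a i) * Polynomial.X ^ i)) =
    ∑ i ∈ Finset.range (d + 1), a i * (i * p ^ (i - 1)) := by
  rw [map_sum, eval_finset_sum]
  refine Finset.sum_congr rfl fun i _ => ?_
  rw [derivative_C_mul, derivative_X_pow]
  simp [mul_assoc]

/-- **Finite-time blow-up for `ẍ = P'(x)` with nonnegative coefficients.**
Let `d ≥ 3`, let `a₀,…,a_d ≥ 0` with `a_d > 0`, and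
`P(x) = a_d x^d + ⋯ + a₁ x + a₀`.  Then the maximal solution of
`ẍ = P'(x)` with `x(0) = 1`, `ẋ(0) = √(2 a_d)` blows up in finite time: its
maximal interval of existence does not contain `[0,∞)`. -/
theorem blowup_positive_coeffs (d : ℕ) (hd : 3 ≤ d) (a : ℕ → ℝ)
    (ha : ∀ i ≤ d, 0 ≤ a i) (had : 0 < a d) :
    ∀ (x v : ℝ → ℝ) (s : Set ℝ),
      IsMaximalSolution
        (fun _ p => Polynomial.eval p (Polynomial.derivative
          (∑ i ∈ Finset.range (d + 1), Polynomial.C (a i) * Polynomial.X ^ i)))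
        x v s →
      (0 : ℝ) ∈ s → x 0 = 1 → v 0 = Real.sqrt (2 * a d) →
      ¬ Ici (0 : ℝ) ⊆ s := by
  intro x v s hmax hs0 hx0 hv0 hsub
  obtain ⟨-, -, -, hsol, -⟩ := hmax
  set F : ℝ → ℝ := fun p => Polynomial.eval p (Polynomial.derivative
      (∑ i ∈ Finset.range (d + 1), Polynomial.C (a i) * Polynomial.X ^ i)) with hFdef
  have hx : ∀ t, 0 ≤ t → HasDerivAt x (v t) t := fun t ht => (hsol t (hsub ht)).1
  have hv : ∀ t, 0 ≤ t → HasDerivAt v (F (x t)) t := fun t ht => (hsol t (hsub ht)).2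
  have hc2 : (0:ℝ) < 2 * a d := by linarith
  set c : ℝ := Real.sqrt (2 * a d) with hcdef
  have hc : 0 < c := Real.sqrt_pos.mpr hc2
  have hcsq : c ^ 2 = 2 * a d := Real.sq_sqrt hc2.le
  -- polynomial bounds
  have hFnonneg : ∀ p : ℝ, 0 ≤ p → 0 ≤ F p := by
    intro p hp
    rw [hFdef]; simp only []
    rw [blowup_aux_eval]
    refine Finset.sum_nonneg fun i hi => ?_
    have hai : 0 ≤ a i := ha i (Finset.mem_range_succ_iff.mp hi)
    positivity
  have hFlb : ∀ p : ℝ, 0 ≤ p → (d:ℝ) * a d * p ^ (d - 1) ≤ F p := by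
    intro p hp
    rw [hFdef]; simp only []
    rw [blowup_aux_eval]
    have : (d:ℝ) * a d * p ^ (d - 1) = a d * ((d:ℝ) * p ^ (d - 1)) := by ring
    rw [this]
    refine Finset.single_le_sum (f := fun i => a i * (i * p ^ (i - 1)))
      (fun i hi => ?_) (Finset.self_mem_range_succ d)
    have hai : 0 ≤ a i := ha i (Finset.mem_range_succ_iff.mp hi)
    positivity
  -- Step 1 : x ≥ 1 and v ≥ c forever
  have key : ∀ t, 0 ≤ t → 1 ≤ x t ∧ c ≤ v t := by
    by_contra hbad
    push_neg at hbad
    obtain ⟨t₀, ht₀0, ht₀⟩ := hbad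
    set B : Set ℝ := {t : ℝ | 0 ≤ t ∧ (x t < 1 ∨ v t < c)} with hBdef
    have hBne : B.Nonempty := by
      refine ⟨t₀, ht₀0, ?_⟩
      rcases lt_or_ge (x t₀) 1 with h | h
      exacts [Or.inl h, Or.inr (ht₀ h)]
    have hBbd : BddBelow B := ⟨0, fun b hb => hb.1⟩
    set T : ℝ := sInf B with hTdef
    have hT0 : 0 ≤ T := le_csInf hBne fun b hb => hb.1
    have hgoodlt : ∀ u, 0 ≤ u → u < T → 1 ≤ x u ∧ c ≤ v u := by
      intro u hu hult
      by_contra hbadu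
      have huB : u ∈ B := by
        refine ⟨hu, ?_⟩
        rcases not_and_or.mp hbadu with h | h
        exacts [Or.inl (lt_of_not_ge h), Or.inr (lt_of_not_ge h)]
      exact absurd (csInf_le hBbd huB) (not_le.mpr hult)
    have hgoodT : 1 ≤ x T ∧ c ≤ v T := by
      rcases eq_or_lt_of_le hT0 with h | h
      · constructor
        · rw [← h, hx0]
        · rw [← h, hv0]
      · have hxc : ContinuousAt x T := (hx T hT0).continuousAt
        have hvc : ContinuousAt v T := (hv T hT0).continuousAt
        have hIoo : Ioo (0:ℝ) T ∈ nhdsWithin T (Iio T) :=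
          Ioo_mem_nhdsLT_of_mem ⟨h, le_refl T⟩
        constructor
        · refine ge_of_tendsto (hxc.tendsto.mono_left nhdsWithin_le_nhds :
            Filter.Tendsto x (nhdsWithin T (Iio T)) _) ?_
          filter_upwards [hIoo] with u hu
          exact (hgoodlt u hu.1.le hu.2).1
        · refine ge_of_tendsto (hvc.tendsto.mono_left nhdsWithin_le_nhds :
            Filter.Tendsto v (nhdsWithin T (Iio T)) _) ?_
          filter_upwards [hIoo] with u hu
          exact (hgoodlt u hu.1.le hu.2).2
    -- persistence past T
    have hvTpos : 0 < v T := lt_of_lt_of_le hc hgoodT.2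
    have hvcT : ContinuousAt v T := (hv T hT0).continuousAt
    have hmem : v ⁻¹' Ioi 0 ∈ nhds T := hvcT (Ioi_mem_nhds hvTpos)
    obtain ⟨ε, hε, hball⟩ := Metric.mem_nhds_iff.mp hmem
    set δ : ℝ := ε / 2 with hδdef
    have hδ : 0 < δ := by positivity
    set I : Set ℝ := Icc T (T + δ) with hIdef
    have hIsub : I ⊆ Ici (0:ℝ) := fun u hu => le_trans hT0 hu.1
    have hvpos : ∀ u ∈ I, 0 < v u := by
      intro u hu
      have : u ∈ Metric.ball T ε := by
        rw [Metric.mem_ball, Real.dist_eq, abs_of_nonneg (by linarith [hu.1])]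
        have := hu.2
        simp only [hδdef] at this
        linarith
      exact hball this
    have hintI : interior I = Ioo T (T + δ) := by rw [hIdef, interior_Icc]
    have hxmono : MonotoneOn x I := by
      refine monotoneOn_of_deriv_nonneg (convex_Icc _ _)
        (fun u hu => ((hx u (hIsub hu)).continuousAt).continuousWithinAt)
        (fun u hu => ?_) (fun u hu => ?_)
      · rw [hintI] at hu
        exact ((hx u (hIsub (Ioo_subset_Icc_self hu))).differentiableAt).differentiableWithinAt
      · rw [hintI] at hu
        rw [(hx u (hIsub (Ioo_subset_Icc_self hu))).deriv]
        exact (hvpos u (Ioo_subset_Icc_self hu)).le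
    have hx1 : ∀ u ∈ I, 1 ≤ x u := by
      intro u hu
      have hTI : T ∈ I := left_mem_Icc.mpr (by linarith)
      exact le_trans hgoodT.1 (hxmono hTI hu hu.1)
    have hvmono : MonotoneOn v I := by
      refine monotoneOn_of_deriv_nonneg (convex_Icc _ _)
        (fun u hu => ((hv u (hIsub hu)).continuousAt).continuousWithinAt)
        (fun u hu => ?_) (fun u hu => ?_)
      · rw [hintI] at hu
        exact ((hv u (hIsub (Ioo_subset_Icc_self hu))).differentiableAt).differentiableWithinAt
      · rw [hintI] at hu
        rw [(hv u (hIsub (Ioo_subset_Icc_self hu))).deriv]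
        exact hFnonneg (x u) (by linarith [hx1 u (Ioo_subset_Icc_self hu)])
    have hvge : ∀ u ∈ I, c ≤ v u := by
      intro u hu
      have hTI : T ∈ I := left_mem_Icc.mpr (by linarith)
      exact le_trans hgoodT.2 (hvmono hTI hu hu.1)
    obtain ⟨b, hbB, hblt⟩ := (csInf_lt_iff hBbd hBne).mp
      (show sInf B < T + δ by rw [← hTdef]; linarith)
    have hbT : T ≤ b := csInf_le hBbd hbB
    have hbI : b ∈ I := ⟨hbT, hblt.le⟩
    rcases hbB.2 with h | h
    · exact absurd (hx1 b hbI) (not_le.mpr h)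
    · exact absurd (hvge b hbI) (not_le.mpr h)
  -- Step 2 : energy estimate
  have hE : ∀ t, 0 ≤ t → 2 * a d * x t ^ d ≤ v t ^ 2 := by
    set E : ℝ → ℝ := fun t => v t ^ 2 - 2 * a d * x t ^ d with hEdef
    have hEd : ∀ t, 0 ≤ t →
        HasDerivAt E (2 * v t * F (x t) - 2 * a d * ((d:ℝ) * x t ^ (d - 1) * v t)) t := by
      intro t ht
      have h1 := (hv t ht).pow 2
      have h2 := HasDerivAt.const_mul (2 * a d) ((hx t ht).pow d)
      have h3 := h1.sub h2
      refine HasDerivAt.congr_deriv h3 ?_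
      push_cast
      ring
    have hEmono : MonotoneOn E (Ici 0) := by
      refine monotoneOn_of_deriv_nonneg (convex_Ici 0)
        (fun u hu => ((hEd u hu).differentiableAt).continuousAt.continuousWithinAt)
        (fun u hu => ?_) (fun u hu => ?_)
      · rw [interior_Ici] at hu
        exact ((hEd u hu.le).differentiableAt).differentiableWithinAt
      · rw [interior_Ici] at hu
        rw [(hEd u hu.le).deriv]
        obtain ⟨hx1, hv1⟩ := key u hu.le
        have hxu0 : (0:ℝ) ≤ x u := by linarith
        have hF1 := hFlb (x u) hxu0
        have hvu0 : 0 ≤ v u := le_trans hc.le hv1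
        nlinarith [mul_nonneg hvu0 (sub_nonneg.mpr hF1)]
    have hE0 : E 0 = 0 := by
      simp only [hEdef, hx0, hv0, one_pow, mul_one]
      rw [Real.sq_sqrt hc2.le]
      ring
    intro t ht
    have h := hEmono (self_mem_Ici) (mem_Ici.mpr ht) ht
    rw [hE0] at h
    simp only [hEdef] at h
    linarith
  -- Step 3 : v ≥ c x √x
  have hvlb : ∀ t, 0 ≤ t → c * (x t * Real.sqrt (x t)) ≤ v t := by
    intro t ht
    obtain ⟨hx1, hv1⟩ := key t ht
    have hx0' : (0:ℝ) ≤ x t := by linarith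
    have h3d : x t ^ 3 ≤ x t ^ d := pow_le_pow_right₀ hx1 hd
    have hsq : (c * (x t * Real.sqrt (x t))) ^ 2 ≤ v t ^ 2 := by
      have heq : (c * (x t * Real.sqrt (x t))) ^ 2 = 2 * a d * x t ^ 3 := by
        rw [mul_pow, mul_pow, Real.sq_sqrt hx0', hcsq]
        ring
      rw [heq]
      calc 2 * a d * x t ^ 3 ≤ 2 * a d * x t ^ d := by nlinarith
        _ ≤ v t ^ 2 := hE t ht
    have hnn : 0 ≤ c * (x t * Real.sqrt (x t)) := by positivity
    have hvnn : 0 ≤ v t := le_trans hc.le hv1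
    have := Real.sqrt_le_sqrt hsq
    rwa [Real.sqrt_sq hnn, Real.sqrt_sq hvnn] at this
  -- Step 4 : g = 1/√x decreases at rate ≥ c/2, contradiction
  set g : ℝ → ℝ := fun t => (Real.sqrt (x t))⁻¹ with hgdef
  have hgd : ∀ t, 0 ≤ t → HasDerivAt g
      (-(v t / (2 * Real.sqrt (x t))) / (Real.sqrt (x t)) ^ 2) t := by
    intro t ht
    have hx1 := (key t ht).1
    have hxne : x t ≠ 0 := by linarith
    have hsne : Real.sqrt (x t) ≠ 0 := by
      have : 0 < Real.sqrt (x t) := Real.sqrt_pos.mpr (by linarith)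
      exact this.ne'
    exact ((hx t ht).sqrt hxne).inv hsne
  have hgbound : ∀ t, 0 ≤ t →
      -(v t / (2 * Real.sqrt (x t))) / (Real.sqrt (x t)) ^ 2 ≤ -(c / 2) := by
    intro t ht
    have hx1 := (key t ht).1
    have hxpos : (0:ℝ) < x t := by linarith
    have hs : 0 < Real.sqrt (x t) := Real.sqrt_pos.mpr hxpos
    have hvt := hvlb t ht
    rw [Real.sq_sqrt hxpos.le, neg_div, div_div]
    rw [neg_le_neg_iff, le_div_iff₀ (by positivity)]
    calc c / 2 * (2 * Real.sqrt (x t) * x t) = c * (x t * Real.sqrt (x t)) := by ring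
      _ ≤ v t := hvt
  set h : ℝ → ℝ := fun t => g t + c / 2 * t with hhdef
  have hhd : ∀ t, 0 ≤ t → HasDerivAt h
      (-(v t / (2 * Real.sqrt (x t))) / (Real.sqrt (x t)) ^ 2 + c / 2) t := by
    intro t ht
    have := (hgd t ht).add (((hasDerivAt_id t).const_mul (c / 2)))
    simp only [mul_one] at this
    exact this
  have hhmono : AntitoneOn h (Ici 0) := by
    refine antitoneOn_of_deriv_nonpos (convex_Ici 0)
      (fun u hu => ((hhd u hu).differentiableAt).continuousAt.continuousWithinAt)
      (fun u hu => ?_) (fun u hu => ?_)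
    · rw [interior_Ici] at hu
      exact ((hhd u hu.le).differentiableAt).differentiableWithinAt
    · rw [interior_Ici] at hu
      rw [(hhd u hu.le).deriv]
      linarith [hgbound u hu.le]
  have hh0 : h 0 = 1 := by
    simp [hhdef, hgdef, hx0]
  have ht₁ : (0:ℝ) ≤ 4 / c := by positivity
  have hle := hhmono (self_mem_Ici) (mem_Ici.mpr ht₁) ht₁
  rw [hh0] at hle
  have hgpos : 0 < g (4 / c) := by
    have hx1 := (key (4 / c) ht₁).1
    have : 0 < Real.sqrt (x (4 / c)) := Real.sqrt_pos.mpr (by linarith)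
    simp only [hgdef]
    positivity
  have hterm : c / 2 * (4 / c) = 2 := by
    field_simp
    ring
  simp only [hhdef] at hle
  rw [hterm] at hle
  linarith

end
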